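/- Summability of the weighted consensus deviation: Let x^{k+1} = (W ⊗ I_d)(x^k − λ^k u^k) with W symmetric doubly stochastic and η := ‖W − (1/m)𝟏𝟏ᵀ‖ ∈ (0,1), and averages x̄^k := (1/m)Σ_i x_i^k. Suppose the stepsizes λ^k ≥ 0 are non-increasing and square summable (Σ_k (λ^k)² < ∞) and the disturbances are uniformly bounded, ‖u^k‖ ≤ C for all k and some C < ∞. Then Σ_{k=0}^∞ λ^k ‖x^k − x̄^k ⊗ 𝟏‖ < ∞; in particular, if each ∇f_i is ν-Lipschitz and q^k := (1/m)Σ_{i=1}^m ∇f_i(x_i^k) − ∇F(x̄^k) with F := (1/m)Σ f_i, then Σ_{k=0}^∞ λ^k ‖q^k‖ < ∞. -/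

import Mathlib

open scoped Matrix NNReal

/-- The Euclidean norm of the stacked vector `(y 1, …, y m) ∈ ℝ^{md}`. -/
noncomputable def stackedNorm {m d : ℕ} (y : Fin m → EuclideanSpace ℝ (Fin d)) : ℝ :=
  Real.sqrt (∑ i, ‖y i‖ ^ 2)

lemma stackedNorm_nonneg {m d : ℕ} (y : Fin m → EuclideanSpace ℝ (Fin d)) :
    0 ≤ stackedNorm y := Real.sqrt_nonneg _

lemma stackedNorm_eq_norm {m d : ℕ} (y : Fin m → EuclideanSpace ℝ (Fin d)) :
    stackedNorm y = ‖(WithLp.equiv 2 (∀ _ : Fin m, EuclideanSpace ℝ (Fin d))).symm y‖ := by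
  rw [PiLp.norm_eq_of_L2]; rfl

lemma stackedNorm_sub_le {m d : ℕ} (a b : Fin m → EuclideanSpace ℝ (Fin d)) :
    stackedNorm (fun i => a i - b i) ≤ stackedNorm a + stackedNorm b := by
  simp only [stackedNorm_eq_norm]
  exact norm_sub_le _ _

lemma stackedNorm_smul {m d : ℕ} (c : ℝ) (a : Fin m → EuclideanSpace ℝ (Fin d)) :
    stackedNorm (fun i => c • a i) = |c| * stackedNorm a := by
  simp only [stackedNorm_eq_norm]
  have : (WithLp.equiv 2 (∀ _ : Fin m, EuclideanSpace ℝ (Fin d))).symm (fun i => c • a i)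
      = c • (WithLp.equiv 2 (∀ _ : Fin m, EuclideanSpace ℝ (Fin d))).symm a := rfl
  rw [this, norm_smul, Real.norm_eq_abs]

lemma stacked_contraction {m d : ℕ} (A : Matrix (Fin m) (Fin m) ℝ) {η : ℝ}
    (hA : ‖Matrix.toEuclideanCLM (𝕜 := ℝ) (n := Fin m) A‖ ≤ η)
    (v : Fin m → EuclideanSpace ℝ (Fin d)) :
    stackedNorm (fun i => ∑ j, A i j • v j) ≤ η * stackedNorm v := by
  have hη0 : 0 ≤ η := le_trans (norm_nonneg _) hA
  have happ : ∀ (i : Fin m) (r : Fin d), (∑ j, A i j • v j) r = ∑ j, A i j * v j r := by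
    intro i r
    rw [WithLp.ofLp_sum, Finset.sum_apply]
    simp [PiLp.smul_apply]
  have hsq : ∀ w : EuclideanSpace ℝ (Fin d), ‖w‖ ^ 2 = ∑ r, (w r) ^ 2 := by
    intro w
    rw [PiLp.norm_sq_eq_of_L2]
    simp [Real.norm_eq_abs, sq_abs]
  have hsqm : ∀ w : EuclideanSpace ℝ (Fin m), ‖w‖ ^ 2 = ∑ r, (w r) ^ 2 := by
    intro w
    rw [PiLp.norm_sq_eq_of_L2]
    simp [Real.norm_eq_abs, sq_abs]
  have key : ∑ i, ‖∑ j, A i j • v j‖ ^ 2 ≤ η ^ 2 * ∑ j, ‖v j‖ ^ 2 := by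
    calc ∑ i, ‖∑ j, A i j • v j‖ ^ 2 = ∑ i, ∑ r, (∑ j, A i j * v j r) ^ 2 := by
          simp_rw [hsq, happ]
      _ = ∑ r, ∑ i, (∑ j, A i j * v j r) ^ 2 := Finset.sum_comm
      _ ≤ ∑ r : Fin d, η ^ 2 * ∑ j, (v j r) ^ 2 := by
          refine Finset.sum_le_sum fun r _ => ?_
          set w : Fin m → ℝ := fun j => v j r with hw
          have h1 : ∑ i, (∑ j, A i j * v j r) ^ 2
              = ‖(WithLp.equiv 2 (Fin m → ℝ)).symm (A *ᵥ w)‖ ^ 2 := by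
            rw [hsqm]
            simp [Matrix.mulVec, dotProduct, hw]
          have h2 : ‖(WithLp.equiv 2 (Fin m → ℝ)).symm (A *ᵥ w)‖
              ≤ η * ‖(WithLp.equiv 2 (Fin m → ℝ)).symm w‖ := by
            rw [show (WithLp.equiv 2 (Fin m → ℝ)).symm (A *ᵥ w) = Matrix.toEuclideanCLM (𝕜 := ℝ) (n := Fin m) A ((WithLp.equiv 2 _).symm w) from rfl]
            calc ‖Matrix.toEuclideanCLM (𝕜 := ℝ) (n := Fin m) A ((WithLp.equiv 2 _).symm w)‖
                ≤ ‖Matrix.toEuclideanCLM (𝕜 := ℝ) (n := Fin m) A‖ * ‖(WithLp.equiv 2 _).symm w‖ :=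
                  ContinuousLinearMap.le_opNorm _ _
              _ ≤ η * ‖(WithLp.equiv 2 _).symm w‖ :=
                  mul_le_mul_of_nonneg_right hA (norm_nonneg _)
          have h3 : ‖(WithLp.equiv 2 (Fin m → ℝ)).symm w‖ ^ 2 = ∑ j, (v j r) ^ 2 := by
            rw [hsqm]; rfl
          rw [h1, ← h3, ← mul_pow]
          exact pow_le_pow_left₀ (norm_nonneg _) h2 2
      _ = η ^ 2 * ∑ j, ‖v j‖ ^ 2 := by
          rw [← Finset.mul_sum, Finset.sum_comm]
          simp_rw [hsq]
  have h4 : stackedNorm (fun i => ∑ j, A i j • v j)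
      = Real.sqrt (∑ i, ‖∑ j, A i j • v j‖ ^ 2) := rfl
  rw [h4]
  calc Real.sqrt (∑ i, ‖∑ j, A i j • v j‖ ^ 2) ≤ Real.sqrt (η ^ 2 * ∑ j, ‖v j‖ ^ 2) :=
        Real.sqrt_le_sqrt key
    _ = η * stackedNorm v := by
        rw [Real.sqrt_mul (sq_nonneg η), Real.sqrt_sq hη0]; rfl

private lemma smul_expand_aux {E : Type*} [AddCommGroup E] [Module ℝ E] (c e : ℝ) (p q r : E) :
    (c - e) • ((p - q) - r) = (c • (p - r) - c • q) - (e • (p - r) - e • q) := by module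

lemma consensus_step {m d : ℕ} (hm : 0 < m) (W A : Matrix (Fin m) (Fin m) ℝ)
    (hWrow : W *ᵥ (fun _ => (1 : ℝ)) = fun _ => 1)
    (hWcol : (fun _ => (1 : ℝ)) ᵥ* W = fun _ => 1)
    (hA : ∀ i j, A i j = W i j - (m:ℝ)⁻¹)
    (lamk : ℝ) (uk xk xk1 : Fin m → EuclideanSpace ℝ (Fin d))
    (hx : ∀ i, xk1 i = ∑ j, W i j • (xk j - lamk • uk j)) (i : Fin m) :
    xk1 i - (m:ℝ)⁻¹ • ∑ i', xk1 i'
      = ∑ j, A i j • ((xk j - (m:ℝ)⁻¹ • ∑ i', xk i') - lamk • uk j) := by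
  have hrow : ∀ i, ∑ j, W i j = 1 := by
    intro i; simpa [Matrix.mulVec, dotProduct] using congrFun hWrow i
  have hcol : ∀ j, ∑ i, W i j = 1 := by
    intro j; simpa [Matrix.vecMul, dotProduct] using congrFun hWcol j
  have hmean : ∑ i', xk1 i' = ∑ j, (xk j - lamk • uk j) := by
    simp only [hx]
    rw [Finset.sum_comm]
    refine Finset.sum_congr rfl fun j _ => ?_
    rw [← Finset.sum_smul, hcol, one_smul]
  have hmne : (m:ℝ) ≠ 0 := by exact_mod_cast hm.ne'
  have hR : ∑ j, A i j • ((xk j - (m:ℝ)⁻¹ • ∑ i', xk i') - lamk • uk j)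
      = (∑ j, W i j • (xk j - lamk • uk j))
        - (m:ℝ)⁻¹ • ∑ j, (xk j - lamk • uk j) := by
    have hexp : ∀ j : Fin m, A i j • ((xk j - (m:ℝ)⁻¹ • ∑ i', xk i') - lamk • uk j)
        = (W i j • (xk j - lamk • uk j) - W i j • ((m:ℝ)⁻¹ • ∑ i', xk i'))
          - ((m:ℝ)⁻¹ • (xk j - lamk • uk j) - (m:ℝ)⁻¹ • ((m:ℝ)⁻¹ • ∑ i', xk i')) := by
      intro j
      rw [hA]
      exact smul_expand_aux (W i j) (m:ℝ)⁻¹ (xk j) ((m:ℝ)⁻¹ • ∑ i', xk i') (lamk • uk j)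
    rw [Finset.sum_congr rfl (fun j _ => hexp j), Finset.sum_sub_distrib,
      Finset.sum_sub_distrib, Finset.sum_sub_distrib, ← Finset.sum_smul, hrow, one_smul,
      ← Finset.smul_sum, Finset.sum_const, Finset.card_univ, Fintype.card_fin,
      ← Nat.cast_smul_eq_nsmul ℝ, smul_smul, mul_inv_cancel₀ hmne, one_smul]
    abel
  rw [hx i, hmean, hR]

lemma gradient_avg {m d : ℕ} (f : Fin m → EuclideanSpace ℝ (Fin d) → ℝ)
    (hdiff : ∀ i, Differentiable ℝ (f i)) (θ : EuclideanSpace ℝ (Fin d)) :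
    gradient (fun θ => (m:ℝ)⁻¹ * ∑ i, f i θ) θ = (m:ℝ)⁻¹ • ∑ i, gradient (f i) θ := by
  have hds : DifferentiableAt ℝ (fun θ => ∑ i, f i θ) θ :=
    DifferentiableAt.fun_sum (fun i _ => hdiff i θ)
  have h1 : fderiv ℝ (fun θ => (m:ℝ)⁻¹ * ∑ i, f i θ) θ
      = (m:ℝ)⁻¹ • fderiv ℝ (fun θ => ∑ i, f i θ) θ := fderiv_const_mul hds _
  have h2 : fderiv ℝ (fun θ => ∑ i, f i θ) θ = ∑ i, fderiv ℝ (f i) θ :=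
    fderiv_fun_sum (fun i _ => hdiff i θ)
  simp only [gradient, h1, h2, map_smul, map_sum]

/-- **Summability of the weighted consensus deviation**: for the dynamics
`x^{k+1} = (W ⊗ I_d)(x^k - λ^k u^k)` with `W` symmetric doubly stochastic,
`η = ‖W - (1/m)𝟙𝟙ᵀ‖ ∈ (0,1)`, non-increasing square-summable stepsizes and uniformly
bounded disturbances, `∑_k λ^k ‖x^k - x̄^k ⊗ 𝟙‖ < ∞`; in particular, if every `∇f_i` is
`ν`-Lipschitz, then with `q^k = (1/m)∑ ∇f_i(x_i^k) - ∇F(x̄^k)` also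
`∑_k λ^k ‖q^k‖ < ∞`. -/
theorem weighted_consensus_deviation_summable
    {m d : ℕ} (hm : 0 < m)
    (W : Matrix (Fin m) (Fin m) ℝ)
    (hWsymm : W.IsSymm)
    (hWnonneg : ∀ i j, 0 ≤ W i j)
    (hWrow : W *ᵥ (fun _ => (1 : ℝ)) = fun _ => 1)
    (hWcol : (fun _ => (1 : ℝ)) ᵥ* W = fun _ => 1)
    (η : ℝ)
    (hη : η = ‖Matrix.toEuclideanCLM (𝕜 := ℝ) (n := Fin m)
        (W - (m : ℝ)⁻¹ • Matrix.of (fun _ _ => (1 : ℝ)))‖)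
    (hη0 : 0 < η) (hη1 : η < 1)
    (lam : ℕ → ℝ) (hlam : ∀ k, 0 ≤ lam k)
    (hmono : Antitone lam)
    (hsq : Summable (fun k => lam k ^ 2))
    (u : ℕ → Fin m → EuclideanSpace ℝ (Fin d))
    (C : ℝ) (hu : ∀ k, stackedNorm (u k) ≤ C)
    (x : ℕ → Fin m → EuclideanSpace ℝ (Fin d))
    (hx : ∀ k i, x (k + 1) i = ∑ j, W i j • (x k j - lam k • u k j))
    (f : Fin m → EuclideanSpace ℝ (Fin d) → ℝ)
    (hdiff : ∀ i, Differentiable ℝ (f i))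
    (ν : ℝ≥0)
    (hLip : ∀ i, LipschitzWith ν (gradient (f i))) :
    Summable (fun k => lam k *
        stackedNorm (fun i => x k i - (m : ℝ)⁻¹ • ∑ i', x k i'))
    ∧ Summable (fun k => lam k *
        ‖(m : ℝ)⁻¹ • ∑ i, gradient (f i) (x k i)
          - gradient (fun θ => (m : ℝ)⁻¹ * ∑ i, f i θ) ((m : ℝ)⁻¹ • ∑ i', x k i')‖) := by
  set A : Matrix (Fin m) (Fin m) ℝ := W - (m : ℝ)⁻¹ • Matrix.of (fun _ _ => (1 : ℝ)) with hAdef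
  have hAnorm : ‖Matrix.toEuclideanCLM (𝕜 := ℝ) (n := Fin m) A‖ ≤ η := hη.ge
  have hAij : ∀ i j, A i j = W i j - (m:ℝ)⁻¹ := by
    intro i j
    simp [hAdef, Matrix.sub_apply, Matrix.smul_apply]
  set a : ℕ → ℝ := fun k => stackedNorm (fun i => x k i - (m:ℝ)⁻¹ • ∑ i', x k i') with ha
  have ha0 : ∀ k, 0 ≤ a k := fun k => stackedNorm_nonneg _
  have hC0 : 0 ≤ C := le_trans (stackedNorm_nonneg _) (hu 0)
  -- one-step recursion
  have hrec : ∀ k, a (k+1) ≤ η * a k + C * lam k := by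
    intro k
    have hid : (fun i => x (k+1) i - (m:ℝ)⁻¹ • ∑ i', x (k+1) i')
        = fun i => ∑ j, A i j • ((fun j => (x k j - (m:ℝ)⁻¹ • ∑ i', x k i') - lam k • u k j) j) :=
      funext fun i => consensus_step hm W A hWrow hWcol hAij (lam k) (u k) (x k) (x (k+1))
        (hx k) i
    have hstep : a (k+1) ≤ η * stackedNorm
        (fun j => (x k j - (m:ℝ)⁻¹ • ∑ i', x k i') - lam k • u k j) := by
      show stackedNorm (fun i => x (k+1) i - (m:ℝ)⁻¹ • ∑ i', x (k+1) i')
        ≤ η * stackedNorm (fun j => (x k j - (m:ℝ)⁻¹ • ∑ i', x k i') - lam k • u k j)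
      rw [hid]
      exact stacked_contraction A hAnorm _
    have htri : stackedNorm (fun j => (x k j - (m:ℝ)⁻¹ • ∑ i', x k i') - lam k • u k j)
        ≤ a k + lam k * C := by
      calc stackedNorm (fun j => (x k j - (m:ℝ)⁻¹ • ∑ i', x k i') - lam k • u k j)
          ≤ a k + stackedNorm (fun j => lam k • u k j) :=
            stackedNorm_sub_le _ _
        _ = a k + lam k * stackedNorm (u k) := by
            rw [stackedNorm_smul, abs_of_nonneg (hlam k)]
        _ ≤ a k + lam k * C := by
            have := mul_le_mul_of_nonneg_left (hu k) (hlam k)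
            linarith
    calc a (k+1) ≤ η * (a k + lam k * C) :=
          hstep.trans (mul_le_mul_of_nonneg_left htri hη0.le)
      _ = η * a k + η * (lam k * C) := mul_add _ _ _
      _ ≤ η * a k + C * lam k := by
          have h1 : 0 ≤ lam k * C := mul_nonneg (hlam k) hC0
          nlinarith
  -- explicit bound by induction
  have hbound : ∀ k, a k ≤ η^k * a 0 + C * ∑ j ∈ Finset.range k, η^(k-1-j) * lam j := by
    intro k
    induction k with
    | zero => simp
    | succ k ih =>
      have h1 : ∑ j ∈ Finset.range (k+1), η^(k-j) * lam j
          = η * (∑ j ∈ Finset.range k, η^(k-1-j) * lam j) + lam k := by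
        rw [Finset.sum_range_succ, Finset.mul_sum]
        congr 1
        · refine Finset.sum_congr rfl fun j hj => ?_
          rw [Finset.mem_range] at hj
          have hkj : k - j = (k-1-j)+1 := by omega
          rw [hkj, pow_succ]; ring
        · simp
      have h2 : a (k+1) ≤ η * (η^k * a 0 + C * ∑ j ∈ Finset.range k, η^(k-1-j) * lam j)
          + C * lam k := by
        have := mul_le_mul_of_nonneg_left ih hη0.le
        have := hrec k
        linarith
      have h3 : (k+1) - 1 = k := by omega
      calc a (k+1) ≤ η * (η^k * a 0 + C * ∑ j ∈ Finset.range k, η^(k-1-j) * lam j)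
            + C * lam k := h2
        _ = η^(k+1) * a 0 + C * ∑ j ∈ Finset.range (k+1), η^(k-j) * lam j := by
            rw [h1, pow_succ]; ring
        _ = η^(k+1) * a 0 + C * ∑ j ∈ Finset.range (k+1), η^((k+1)-1-j) * lam j := by
            rw [h3]
  -- Cauchy-product majorant
  set c : ℕ → ℝ := fun n => ∑ j ∈ Finset.range (n+1), lam j^2 * η^(n-j) with hc
  have hlab : ∀ k, lam k * a k ≤ lam 0 * a 0 * η^k + (C/η) * c k := by
    intro k
    have h2 : lam k * a k
        ≤ lam k * (η^k * a 0) + C * ∑ j ∈ Finset.range k, η^(k-1-j) * (lam j * lam k) := by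
      have := mul_le_mul_of_nonneg_left (hbound k) (hlam k)
      calc lam k * a k ≤ lam k * (η^k * a 0 + C * ∑ j ∈ Finset.range k, η^(k-1-j) * lam j) :=
            this
        _ = lam k * (η^k * a 0)
            + C * ∑ j ∈ Finset.range k, lam k * (η^(k-1-j) * lam j) := by
            rw [← Finset.mul_sum]; ring
        _ = lam k * (η^k * a 0) + C * ∑ j ∈ Finset.range k, η^(k-1-j) * (lam j * lam k) := by
            congr 1
            congr 1
            exact Finset.sum_congr rfl fun j _ => by ring
    have h5 : ∑ j ∈ Finset.range k, η^(k-1-j) * (lam j * lam k)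
        ≤ ∑ j ∈ Finset.range k, (1/η) * (lam j^2 * η^(k-j)) := by
      refine Finset.sum_le_sum fun j hj => ?_
      rw [Finset.mem_range] at hj
      have hkj : k - j = (k-1-j)+1 := by omega
      have hlk : lam k ≤ lam j := hmono hj.le
      have hp : (0:ℝ) ≤ η^(k-1-j) := pow_nonneg hη0.le _
      have e1 : (1/η) * (lam j^2 * η^(k-j)) = η^(k-1-j) * (lam j * lam j) := by
        rw [hkj, pow_succ]
        field_simp
        ring
      rw [e1]
      exact mul_le_mul_of_nonneg_left (mul_le_mul_of_nonneg_left hlk (hlam j)) hp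
    have h6 : ∑ j ∈ Finset.range k, (1/η) * (lam j^2 * η^(k-j)) ≤ (1/η) * c k := by
      rw [← Finset.mul_sum]
      refine mul_le_mul_of_nonneg_left ?_ (by positivity)
      refine Finset.sum_le_sum_of_subset_of_nonneg
        (Finset.range_subset_range.mpr (Nat.le_succ k)) fun j _ _ => ?_
      positivity
    have hCconv : C * ∑ j ∈ Finset.range k, η^(k-1-j) * (lam j * lam k) ≤ (C/η) * c k := by
      have := le_trans h5 h6
      calc C * ∑ j ∈ Finset.range k, η^(k-1-j) * (lam j * lam k)
          ≤ C * ((1/η) * c k) := mul_le_mul_of_nonneg_left this hC0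
        _ = (C/η) * c k := by ring
    have hlk0 : lam k * (η^k * a 0) ≤ lam 0 * a 0 * η^k := by
      have h7 : lam k ≤ lam 0 := hmono (Nat.zero_le k)
      have hp : (0:ℝ) ≤ η^k := pow_nonneg hη0.le _
      have he : lam k * (η^k * a 0) = lam k * a 0 * η^k := by ring
      rw [he]
      exact mul_le_mul_of_nonneg_right (mul_le_mul_of_nonneg_right h7 (ha0 0)) hp
    linarith
  have hgeo : Summable (fun k : ℕ => η ^ k) := summable_geometric_of_lt_one hη0.le hη1
  have hcsum : Summable c := by
    have hf : Summable (fun k => ‖lam k ^ 2‖) := by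
      have : (fun k => ‖lam k ^ 2‖) = fun k => lam k ^ 2 := by
        funext k; rw [Real.norm_eq_abs, abs_of_nonneg (sq_nonneg _)]
      rw [this]; exact hsq
    have hg : Summable (fun t : ℕ => ‖η ^ t‖) := by
      have : (fun t : ℕ => ‖η ^ t‖) = fun t : ℕ => η ^ t := by
        funext t; rw [Real.norm_eq_abs, abs_of_nonneg (pow_nonneg hη0.le _)]
      rw [this]; exact hgeo
    exact (summable_norm_sum_mul_range_of_summable_norm hf hg).of_norm
  have hS1 : Summable (fun k => lam k * a k) := by
    refine Summable.of_nonneg_of_le (fun k => mul_nonneg (hlam k) (ha0 k)) hlab ?_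
    exact ((hgeo.mul_left (lam 0 * a 0)).add (hcsum.mul_left (C/η)))
  refine ⟨hS1, ?_⟩
  -- second part
  have hq : ∀ k, ‖(m : ℝ)⁻¹ • ∑ i, gradient (f i) (x k i)
      - gradient (fun θ => (m : ℝ)⁻¹ * ∑ i, f i θ) ((m : ℝ)⁻¹ • ∑ i', x k i')‖
      ≤ ((ν:ℝ) * Real.sqrt m / m) * a k := by
    intro k
    rw [gradient_avg f hdiff]
    have hsplit : (m : ℝ)⁻¹ • ∑ i, gradient (f i) (x k i)
        - (m:ℝ)⁻¹ • ∑ i, gradient (f i) ((m : ℝ)⁻¹ • ∑ i', x k i')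
        = (m:ℝ)⁻¹ • ∑ i, (gradient (f i) (x k i)
            - gradient (f i) ((m : ℝ)⁻¹ • ∑ i', x k i')) := by
      rw [Finset.sum_sub_distrib, smul_sub]
    rw [hsplit, norm_smul]
    have hcs : ∑ i, ‖x k i - (m : ℝ)⁻¹ • ∑ i', x k i'‖ ≤ Real.sqrt m * a k := by
      have h1 : (∑ i, ‖x k i - (m : ℝ)⁻¹ • ∑ i', x k i'‖)^2
          ≤ (m : ℝ) * ∑ i, ‖x k i - (m : ℝ)⁻¹ • ∑ i', x k i'‖^2 := by
        simpa using sq_sum_le_card_mul_sum_sq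
          (s := Finset.univ) (f := fun i => ‖x k i - (m : ℝ)⁻¹ • ∑ i', x k i'‖)
      have h2 : ∑ i, ‖x k i - (m : ℝ)⁻¹ • ∑ i', x k i'‖
          = Real.sqrt ((∑ i, ‖x k i - (m : ℝ)⁻¹ • ∑ i', x k i'‖)^2) :=
        (Real.sqrt_sq (Finset.sum_nonneg fun i _ => norm_nonneg _)).symm
      rw [h2]
      calc Real.sqrt ((∑ i, ‖x k i - (m : ℝ)⁻¹ • ∑ i', x k i'‖)^2)
          ≤ Real.sqrt ((m : ℝ) * ∑ i, ‖x k i - (m : ℝ)⁻¹ • ∑ i', x k i'‖^2) :=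
            Real.sqrt_le_sqrt h1
        _ = Real.sqrt m * a k := by
            rw [Real.sqrt_mul (Nat.cast_nonneg m)]; rfl
    have hnorm : ‖∑ i, (gradient (f i) (x k i)
        - gradient (f i) ((m : ℝ)⁻¹ • ∑ i', x k i'))‖
        ≤ (ν:ℝ) * (Real.sqrt m * a k) := by
      calc ‖∑ i, (gradient (f i) (x k i) - gradient (f i) ((m : ℝ)⁻¹ • ∑ i', x k i'))‖
          ≤ ∑ i, ‖gradient (f i) (x k i) - gradient (f i) ((m : ℝ)⁻¹ • ∑ i', x k i')‖ :=
            norm_sum_le _ _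
        _ ≤ ∑ i, (ν:ℝ) * ‖x k i - (m : ℝ)⁻¹ • ∑ i', x k i'‖ := by
            refine Finset.sum_le_sum fun i _ => ?_
            have := (hLip i).dist_le_mul (x k i) ((m : ℝ)⁻¹ • ∑ i', x k i')
            simpa [dist_eq_norm] using this
        _ = (ν:ℝ) * ∑ i, ‖x k i - (m : ℝ)⁻¹ • ∑ i', x k i'‖ := by rw [Finset.mul_sum]
        _ ≤ (ν:ℝ) * (Real.sqrt m * a k) :=
            mul_le_mul_of_nonneg_left hcs ν.coe_nonneg
    have hminv : ‖(m:ℝ)⁻¹‖ = (m:ℝ)⁻¹ := by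
      rw [Real.norm_eq_abs, abs_of_nonneg (by positivity)]
    rw [hminv]
    calc (m:ℝ)⁻¹ * ‖∑ i, (gradient (f i) (x k i)
          - gradient (f i) ((m : ℝ)⁻¹ • ∑ i', x k i'))‖
        ≤ (m:ℝ)⁻¹ * ((ν:ℝ) * (Real.sqrt m * a k)) :=
          mul_le_mul_of_nonneg_left hnorm (by positivity)
      _ = ((ν:ℝ) * Real.sqrt m / m) * a k := by ring
  refine Summable.of_nonneg_of_le (fun k => mul_nonneg (hlam k) (norm_nonneg _))
    (fun k => ?_) (hS1.mul_left ((ν:ℝ) * Real.sqrt m / m))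
  calc lam k * ‖(m : ℝ)⁻¹ • ∑ i, gradient (f i) (x k i)
        - gradient (fun θ => (m : ℝ)⁻¹ * ∑ i, f i θ) ((m : ℝ)⁻¹ • ∑ i', x k i')‖
      ≤ lam k * (((ν:ℝ) * Real.sqrt m / m) * a k) :=
        mul_le_mul_of_nonneg_left (hq k) (hlam k)
    _ = ((ν:ℝ) * Real.sqrt m / m) * (lam k * a k) := by ring
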